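/- Let N = (n_ij) ∈ GL(2,ℤ) with det N = −1 have real eigenvalues α > 1 and −1/α, with eigenvectors a = (a₁,a₂)ᵀ, b = (b₁,b₂)ᵀ ∈ ℝ² satisfying N a = α a and N b = (−1/α) b. Let p, q, r be integers with r ≠ 0, set θ = a₁b₂ − a₂b₁, set eᵢ = (1/2) n_{i1}(n_{i1}−1) a₁ b₁ + (1/2) n_{i2}(n_{i2}−1) a₂ b₂ + n_{i1} n_{i2} b₁ a₂ for i = 1,2, and suppose c = (c₁,c₂)ᵀ ∈ ℝ² satisfies (N + I) c + (e₁,e₂)ᵀ − (θ/r)(p,q)ᵀ = 0. Then (N + I) (c₁ − a₁b₁/2, c₂ − a₂b₂/2)ᵀ = (θ/r) (p + (r/2) n₁₁ n₁₂, q + (r/2) n₂₁ n₂₂)ᵀ. -/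

import Mathlib

/-- Equation (8.4) of Fujimoto–Nakayama, for Inoue surfaces of type `S⁻`:
if `(N + I)c + e − (θ/r)(p,q)ᵀ = 0` then
`(N + I)𝐜 = (θ/r)𝐩` where `𝐜 = (c₁ − a₁b₁/2, c₂ − a₂b₂/2)ᵀ` and
`𝐩 = (p + (r/2)n₁₁n₁₂, q + (r/2)n₂₁n₂₂)ᵀ`. -/
theorem stmt_14 (N : Matrix (Fin 2) (Fin 2) ℤ) (hN : N.det = -1)
    (α : ℝ) (hα : 1 < α) (a b : Fin 2 → ℝ)
    (ha : (N.map (Int.cast : ℤ → ℝ)).mulVec a = α • a)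
    (hb : (N.map (Int.cast : ℤ → ℝ)).mulVec b = (-(1 / α)) • b)
    (p q r : ℤ) (hr : r ≠ 0) (θ : ℝ) (hθ : θ = a 0 * b 1 - a 1 * b 0)
    (e : Fin 2 → ℝ)
    (he : ∀ i, e i = (1 / 2 : ℝ) * (N i 0 : ℝ) * ((N i 0 : ℝ) - 1) * a 0 * b 0 +
      (1 / 2 : ℝ) * (N i 1 : ℝ) * ((N i 1 : ℝ) - 1) * a 1 * b 1 +
      (N i 0 : ℝ) * (N i 1 : ℝ) * b 0 * a 1)
    (c : Fin 2 → ℝ)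
    (hc : (N.map (Int.cast : ℤ → ℝ) + 1).mulVec c + e -
      (θ / (r : ℝ)) • ![(p : ℝ), (q : ℝ)] = 0) :
    (N.map (Int.cast : ℤ → ℝ) + 1).mulVec
        ![c 0 - a 0 * b 0 / 2, c 1 - a 1 * b 1 / 2] =
      (θ / (r : ℝ)) •
        ![(p : ℝ) + (r : ℝ) / 2 * (N 0 0 : ℝ) * (N 0 1 : ℝ),
          (q : ℝ) + (r : ℝ) / 2 * (N 1 0 : ℝ) * (N 1 1 : ℝ)] := by
  have hα0 : α ≠ 0 := by linarith
  have hr' : (r : ℝ) ≠ 0 := Int.cast_ne_zero.mpr hr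
  have ha0 := congrFun ha 0
  have ha1 := congrFun ha 1
  have hb0 := congrFun hb 0
  have hb1 := congrFun hb 1
  have hc0 := congrFun hc 0
  have hc1 := congrFun hc 1
  simp [Matrix.mulVec, dotProduct, Fin.sum_univ_two, Matrix.add_apply,
    Matrix.one_apply, Matrix.map_apply, Pi.add_apply, Pi.sub_apply,
    Pi.smul_apply, smul_eq_mul, he, Matrix.vecHead, Matrix.vecTail] at ha0 ha1 hb0 hb1 hc0 hc1
  have K0 : ((N 0 0 : ℝ) * a 0 + (N 0 1 : ℝ) * a 1) * ((N 0 0 : ℝ) * b 0 + (N 0 1 : ℝ) * b 1)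
      = -(a 0 * b 0) := by
    rw [ha0, hb0]; field_simp
  have K1 : ((N 1 0 : ℝ) * a 0 + (N 1 1 : ℝ) * a 1) * ((N 1 0 : ℝ) * b 0 + (N 1 1 : ℝ) * b 1)
      = -(a 1 * b 1) := by
    rw [ha1, hb1]; field_simp
  funext i
  fin_cases i <;>
    simp [Matrix.mulVec, dotProduct, Fin.sum_univ_two, Matrix.add_apply,
      Matrix.one_apply, Matrix.map_apply, Pi.smul_apply, smul_eq_mul]
  · linear_combination hc0 - (1/2) * K0 - hθ * ((N 0 0 : ℝ) * (N 0 1) / 2)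
      - (θ/2 * (N 0 0 : ℝ) * (N 0 1)) * (mul_inv_cancel₀ hr')
  · linear_combination hc1 - (1/2) * K1 - hθ * ((N 1 0 : ℝ) * (N 1 1) / 2)
      - (θ/2 * (N 1 0 : ℝ) * (N 1 1)) * (mul_inv_cancel₀ hr')
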